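/- Fix N ≥ 2 and j ≥ 2 with γ_j = j(N-2+j), and let σ_j(λ) = ũ'(λ)·((N-1) tan λ - f_j(λ)) - 1 as above. If λ* ∈ (0, π/2) satisfies σ_j(λ*) = 0, then σ_j'(λ*) = ũ'(λ*)·(N-1-γ_j)/cos²λ* > 0. -/

import Mathlib

open Real Set Filter Topology

/-- Transversality: if `σⱼ(λ*) = 0` for some `λ* ∈ (0, π/2)` then
`σⱼ'(λ*) = ũ'(λ*)(N-1-γⱼ)/cos²λ* > 0`, where `γⱼ = j(N-2+j)`, `j ≥ 2`. -/
theorem sigma_transversality (N j : ℕ) (hN : 2 ≤ N) (hj : 2 ≤ j)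
    (u u' u'' f : ℝ → ℝ) (l0 : ℝ) (hl0 : l0 ∈ Ioo (0:ℝ) (π/2))
    (hu0 : u' 0 = 0)
    (hu : ∀ θ ∈ Ioo (-(π/2)) (π/2), HasDerivAt u (u' θ) θ)
    (hu' : ∀ θ ∈ Ioo (-(π/2)) (π/2), HasDerivAt u' (u'' θ) θ)
    (hode : ∀ θ ∈ Ioo (-(π/2)) (π/2),
      HasDerivAt (fun s => Real.cos s ^ (N - 1) * u' s) (-(Real.cos θ ^ (N - 1))) θ)
    (hf0 : f 0 = 0)
    (hf : ∀ lam ∈ Ioo (0:ℝ) (π/2),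
      HasDerivAt f (-(f lam)^2 + ((N:ℝ) - 1) * Real.tan lam * f lam
        + ((j:ℝ) * ((N:ℝ) - 2 + (j:ℝ))) / (Real.cos lam)^2) lam)
    (hzero : u' l0 * (((N:ℝ) - 1) * Real.tan l0 - f l0) - 1 = 0) :
    HasDerivAt (fun s => u' s * (((N:ℝ) - 1) * Real.tan s - f s) - 1)
      (u' l0 * (((N:ℝ) - 1) - (j:ℝ) * ((N:ℝ) - 2 + (j:ℝ))) / (Real.cos l0)^2) l0 ∧
    0 < u' l0 * (((N:ℝ) - 1) - (j:ℝ) * ((N:ℝ) - 2 + (j:ℝ))) / (Real.cos l0)^2 := by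
  obtain ⟨hl0p, hl0u⟩ := hl0
  have hpi : (0:ℝ) < π/2 := by positivity
  have hsub : Icc (0:ℝ) l0 ⊆ Ioo (-(π/2)) (π/2) := by
    intro x hx
    exact ⟨lt_of_lt_of_le (by linarith) hx.1, lt_of_le_of_lt hx.2 hl0u⟩
  have hl0mem : l0 ∈ Ioo (-(π/2)) (π/2) := ⟨by linarith, hl0u⟩
  have hcos : 0 < Real.cos l0 := Real.cos_pos_of_mem_Ioo hl0mem
  have hcosne : Real.cos l0 ≠ 0 := ne_of_gt hcos
  -- u' l0 < 0
  have hanti : StrictAntiOn (fun s => Real.cos s ^ (N - 1) * u' s) (Icc 0 l0) := by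
    apply strictAntiOn_of_deriv_neg (convex_Icc 0 l0)
    · intro x hx
      exact (hode x (hsub hx)).continuousAt.continuousWithinAt
    · intro x hx
      rw [interior_Icc] at hx
      have hxm : x ∈ Ioo (-(π/2)) (π/2) :=
        ⟨by linarith [hx.1], lt_trans hx.2 hl0u⟩
      rw [(hode x hxm).deriv]
      have : 0 < Real.cos x := Real.cos_pos_of_mem_Ioo hxm
      have := pow_pos this (N - 1)
      linarith
  have hFlt : Real.cos l0 ^ (N - 1) * u' l0 < Real.cos 0 ^ (N - 1) * u' 0 :=
    hanti (left_mem_Icc.2 hl0p.le) (right_mem_Icc.2 hl0p.le) hl0p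
  rw [hu0, mul_zero] at hFlt
  have hu'neg : u' l0 < 0 := by
    have hp := pow_pos hcos (N - 1)
    nlinarith
  -- second derivative from the ODE
  obtain ⟨m, rfl⟩ : ∃ m, N = m + 2 := ⟨N - 2, by omega⟩
  have hNm1 : (m + 2) - 1 = m + 1 := rfl
  have hcospow : HasDerivAt (fun s => Real.cos s ^ (m + 1))
      ((m + 1 : ℕ) * Real.cos l0 ^ m * (-Real.sin l0)) l0 := by
    simpa using (Real.hasDerivAt_cos l0).fun_pow (m + 1)
  have hprod : HasDerivAt (fun s => Real.cos s ^ (m + 1) * u' s)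
      ((m + 1 : ℕ) * Real.cos l0 ^ m * (-Real.sin l0) * u' l0
        + Real.cos l0 ^ (m + 1) * u'' l0) l0 := hcospow.mul (hu' l0 hl0mem)
  have hodeq := (hode l0 hl0mem)
  rw [hNm1] at hodeq
  have heq : (m + 1 : ℕ) * Real.cos l0 ^ m * (-Real.sin l0) * u' l0
      + Real.cos l0 ^ (m + 1) * u'' l0 = -(Real.cos l0 ^ (m + 1)) :=
    hprod.unique hodeq
  have hkey : Real.cos l0 * u'' l0 = -Real.cos l0 + ((m:ℝ)+1) * Real.sin l0 * u' l0 := by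
    refine mul_left_cancel₀ (pow_ne_zero m hcosne) ?_
    push_cast at heq
    linear_combination heq
  have hu''eq : u'' l0 = -1 + ((m + 2 : ℕ) - 1 : ℝ) * Real.tan l0 * u' l0 := by
    have htan : Real.tan l0 = Real.sin l0 / Real.cos l0 := Real.tan_eq_sin_div_cos l0
    rw [htan]
    push_cast
    field_simp
    linear_combination hkey
  -- derivative of sigma
  have htanD : HasDerivAt Real.tan (1 / Real.cos l0 ^ 2) l0 := Real.hasDerivAt_tan hcosne
  have hfD := hf l0 ⟨hl0p, hl0u⟩
  have hinner : HasDerivAt (fun s => (((m + 2 : ℕ):ℝ) - 1) * Real.tan s - f s)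
      ((((m + 2 : ℕ):ℝ) - 1) * (1 / Real.cos l0 ^ 2)
        - (-(f l0)^2 + (((m + 2 : ℕ):ℝ) - 1) * Real.tan l0 * f l0
          + ((j:ℝ) * (((m + 2 : ℕ):ℝ) - 2 + (j:ℝ))) / (Real.cos l0)^2)) l0 :=
    ((htanD.const_mul _).sub hfD)
  have hsigma : HasDerivAt (fun s => u' s * ((((m + 2 : ℕ):ℝ) - 1) * Real.tan s - f s) - 1)
      (u'' l0 * ((((m + 2 : ℕ):ℝ) - 1) * Real.tan l0 - f l0)
        + u' l0 * ((((m + 2 : ℕ):ℝ) - 1) * (1 / Real.cos l0 ^ 2)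
          - (-(f l0)^2 + (((m + 2 : ℕ):ℝ) - 1) * Real.tan l0 * f l0
            + ((j:ℝ) * (((m + 2 : ℕ):ℝ) - 2 + (j:ℝ))) / (Real.cos l0)^2))) l0 :=
    ((hu' l0 hl0mem).mul hinner).sub_const 1
  have hDval : u'' l0 * ((((m + 2 : ℕ):ℝ) - 1) * Real.tan l0 - f l0)
        + u' l0 * ((((m + 2 : ℕ):ℝ) - 1) * (1 / Real.cos l0 ^ 2)
          - (-(f l0)^2 + (((m + 2 : ℕ):ℝ) - 1) * Real.tan l0 * f l0
            + ((j:ℝ) * (((m + 2 : ℕ):ℝ) - 2 + (j:ℝ))) / (Real.cos l0)^2))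
      = u' l0 * ((((m + 2 : ℕ):ℝ) - 1) - (j:ℝ) * (((m + 2 : ℕ):ℝ) - 2 + (j:ℝ))) / (Real.cos l0)^2 := by
    rw [hu''eq]
    linear_combination ((((m + 2 : ℕ):ℝ) - 1) * Real.tan l0 - f l0) * hzero
  refine ⟨hDval ▸ hsigma, ?_⟩
  have hj2 : (2:ℝ) ≤ (j:ℝ) := by exact_mod_cast hj
  have hm0 : (0:ℝ) ≤ (m:ℝ) := Nat.cast_nonneg m
  have hfac : (((m + 2 : ℕ):ℝ) - 1) - (j:ℝ) * (((m + 2 : ℕ):ℝ) - 2 + (j:ℝ)) < 0 := by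
    push_cast
    nlinarith
  have := mul_pos_of_neg_of_neg hu'neg hfac
  positivity
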